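/- Let T₁ be a heap-ordered tree, let v, w ∈ T₁ with u = nca(v,w) ∉ {v,w}, let q be the child of u on the path to v, and let T₂ be the subtree rooted at q. Let T be the result of merging the paths from v and from w up to u. Then: if x, y are both in T₂ or both not in T₂, nca_T(x,y) = min(T₁[x,y]); if exactly one, say x, is in T₂, then nca_T(x,y) = min(T₂[x,v] ∪ T₁[w,y]). -/

import Mathlib

/-- `prel p a b` : `b` is the parent of `a`. -/
def prel (p : ℤ → Option ℤ) (a b : ℤ) : Prop := p a = some b

/-- `anc p a b` : `b` is an ancestor of `a` (including `a` itself). -/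
def anc (p : ℤ → Option ℤ) (a b : ℤ) : Prop := Relation.ReflTransGen (prel p) a b

/-- `IsNca p x y u` : `u` is the nearest common ancestor of `x` and `y`. -/
def IsNca (p : ℤ → Option ℤ) (x y u : ℤ) : Prop :=
  anc p x u ∧ anc p y u ∧ ∀ z, anc p x z → anc p y z → anc p u z

/-- `pathSet p x y u` : node set of the undirected path between `x` and `y`,
`u` being their nearest common ancestor. -/
def pathSet (p : ℤ → Option ℤ) (x y u : ℤ) : Set ℤ :=
  {z | (anc p x z ∧ anc p z u) ∨ (anc p y z ∧ anc p z u)}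

/-- `onMergedPath p v w u z` : `z` lies on the path from `v` or from `w` up to,
but excluding, their nearest common ancestor `u`. -/
def onMergedPath (p : ℤ → Option ℤ) (v w u z : ℤ) : Prop :=
  (anc p v z ∧ anc p z u ∧ z ≠ u) ∨ (anc p w z ∧ anc p z u ∧ z ≠ u)

namespace MergeAux

variable {p : ℤ → Option ℤ}

lemma prel_func {a b c : ℤ} (h1 : prel p a b) (h2 : prel p a c) : b = c :=
  Option.some.inj (h1.symm.trans h2)

lemma anc_trans {a b c : ℤ} (h1 : anc p a b) (h2 : anc p b c) : anc p a c :=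
  Relation.ReflTransGen.trans h1 h2

section Heap
variable (hp : ∀ a b : ℤ, p a = some b → b < a)
include hp

lemma anc_le {a b : ℤ} (h : anc p a b) : b ≤ a := by
  induction h with
  | refl => exact le_refl _
  | tail h1 h2 ih => exact le_trans (le_of_lt (hp _ _ h2)) ih

lemma anc_lt {a b : ℤ} (h : anc p a b) (hne : b ≠ a) : b < a := by
  rcases Relation.ReflTransGen.cases_head h with rfl | ⟨c, step, rest⟩
  · exact absurd rfl hne
  · exact lt_of_le_of_lt (anc_le hp rest) (hp _ _ step)

lemma anc_antisymm {a b : ℤ} (h1 : anc p a b) (h2 : anc p b a) : a = b :=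
  le_antisymm (anc_le hp h2) (anc_le hp h1)

lemma nca_unique {x y m m' : ℤ} (h1 : IsNca p x y m) (h2 : IsNca p x y m') : m = m' :=
  anc_antisymm hp (h1.2.2 m' h2.1 h2.2.1) (h2.2.2 m h1.1 h1.2.1)

end Heap

lemma anc_comp {a b : ℤ} : ∀ {x : ℤ}, anc p x a → anc p x b → anc p a b ∨ anc p b a := by
  intro x hxa
  induction hxa using Relation.ReflTransGen.head_induction_on with
  | refl => exact fun hb => Or.inl hb
  | @head x' c step rest ih =>
    intro hb
    rcases Relation.ReflTransGen.cases_head hb with rfl | ⟨c', step', rest'⟩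
    · exact Or.inr (Relation.ReflTransGen.head step rest)
    · have hcc : c' = c := prel_func step' step
      subst hcc
      exact ih rest'

lemma finite_between (hp : ∀ a b : ℤ, p a = some b → b < a) {a c : ℤ} (h : anc p a c) :
    Set.Finite {z : ℤ | anc p a z ∧ anc p z c} := by
  induction h using Relation.ReflTransGen.head_induction_on with
  | refl =>
    apply Set.Finite.subset (Set.finite_singleton c)
    rintro z ⟨h1, h2⟩
    simp only [Set.mem_singleton_iff]
    exact (anc_antisymm hp h1 h2).symm
  | @head a' b step rest ih =>
    apply Set.Finite.subset (ih.insert a')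
    rintro z ⟨h1, h2⟩
    rcases Relation.ReflTransGen.cases_head h1 with rfl | ⟨d, step', rest'⟩
    · exact Set.mem_insert _ _
    · have hd : d = b := prel_func step' step
      subst hd
      exact Set.mem_insert_of_mem _ ⟨rest', h2⟩

lemma isNca_swap {x y z : ℤ} (h : IsNca p x y z) : IsNca p y x z :=
  ⟨h.2.1, h.1, fun s h1 h2 => h.2.2 s h2 h1⟩


def Deep (p₁ : ℤ → Option ℤ) (v w u x t : ℤ) : Prop :=
  onMergedPath p₁ v w u t ∧ anc p₁ x t ∧
    ∀ s, onMergedPath p₁ v w u s → anc p₁ x s → anc p₁ t s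

structure Ctx (p₁ pT : ℤ → Option ℤ) (v w u qc : ℤ) : Prop where
  hheap : ∀ a b : ℤ, p₁ a = some b → b < a
  hnca : IsNca p₁ v w u
  huv : u ≠ v
  huw : u ≠ w
  hqc : p₁ qc = some u
  hqcv : anc p₁ v qc
  hoff : ∀ x : ℤ, ¬ onMergedPath p₁ v w u x → pT x = p₁ x
  hon : ∀ x : ℤ, onMergedPath p₁ v w u x → ∀ b : ℤ,
      pT x = some b ↔
        ((onMergedPath p₁ v w u b ∧ b < x ∧
            ∀ z : ℤ, onMergedPath p₁ v w u z → z < x → z ≤ b) ∨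
         (b = u ∧ ∀ z : ℤ, onMergedPath p₁ v w u z → ¬ z < x))

namespace Ctx

variable {p₁ pT : ℤ → Option ℤ} {v w u qc : ℤ} (C : Ctx p₁ pT v w u qc)
include C

lemma M_anc_u {s : ℤ} (h : onMergedPath p₁ v w u s) : anc p₁ s u := by
  rcases h with ⟨_, h, _⟩ | ⟨_, h, _⟩ <;> exact h

lemma M_ne_u {s : ℤ} (h : onMergedPath p₁ v w u s) : s ≠ u := by
  rcases h with ⟨_, _, h⟩ | ⟨_, _, h⟩ <;> exact h

lemma u_lt_M {s : ℤ} (h : onMergedPath p₁ v w u s) : u < s :=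
  anc_lt C.hheap (C.M_anc_u h) (Ne.symm (C.M_ne_u h))

lemma Mfin : Set.Finite {z : ℤ | onMergedPath p₁ v w u z} := by
  apply Set.Finite.subset
    ((finite_between C.hheap C.hnca.1).union (finite_between C.hheap C.hnca.2.1))
  rintro z (⟨h1, h2, _⟩ | ⟨h1, h2, _⟩)
  · exact Or.inl ⟨h1, h2⟩
  · exact Or.inr ⟨h1, h2⟩

lemma pT_heap : ∀ a b : ℤ, pT a = some b → b < a := by
  intro a b h
  by_cases hMa : onMergedPath p₁ v w u a
  · rcases (C.hon a hMa b).mp h with ⟨_, hlt, _⟩ | ⟨rfl, _⟩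
    · exact hlt
    · exact C.u_lt_M hMa
  · exact C.hheap a b (by rwa [C.hoff a hMa] at h)

lemma notM_of_anc_u {s : ℤ} (hus : anc p₁ u s) : ¬ onMergedPath p₁ v w u s :=
  fun hMs => absurd (anc_le C.hheap hus) (not_le.mpr (C.u_lt_M hMs))

lemma anc_pT_of_offpath {t : ℤ} :
    ∀ {x : ℤ}, anc p₁ x t → (∀ s, anc p₁ x s → ¬ onMergedPath p₁ v w u s) → anc pT x t := by
  intro x h
  induction h using Relation.ReflTransGen.head_induction_on with
  | refl => exact fun _ => Relation.ReflTransGen.refl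
  | @head a c step rest ih =>
    intro hoffp
    refine Relation.ReflTransGen.head ?_
      (ih fun s hs => hoffp s (Relation.ReflTransGen.head step hs))
    show pT a = some c
    rw [C.hoff a (hoffp a Relation.ReflTransGen.refl)]
    exact step

lemma anc_p1_of_offpath {t : ℤ} :
    ∀ {x : ℤ}, anc pT x t → (∀ s, anc p₁ x s → ¬ onMergedPath p₁ v w u s) → anc p₁ x t := by
  intro x h
  induction h using Relation.ReflTransGen.head_induction_on with
  | refl => exact fun _ => Relation.ReflTransGen.refl
  | @head a c step rest ih =>
    intro hoffp
    have hMa : ¬ onMergedPath p₁ v w u a := hoffp a Relation.ReflTransGen.refl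
    have step' : prel p₁ a c := by
      show p₁ a = some c
      rw [← C.hoff a hMa]
      exact step
    exact Relation.ReflTransGen.head step'
      (ih fun s hs => hoffp s (Relation.ReflTransGen.head step' hs))

lemma chainM_aux : ∀ n : ℕ, ∀ a : ℤ, onMergedPath p₁ v w u a →
    ((C.Mfin.toFinset.filter (fun z => z < a)).card ≤ n) →
    anc pT a u ∧ ∀ b, onMergedPath p₁ v w u b → b ≤ a → anc pT a b := by
  intro n
  induction n with
  | zero =>
    intro a hMa hcard
    have hempty : ∀ z, onMergedPath p₁ v w u z → ¬ z < a := by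
      intro z hz hlt
      have hmem : z ∈ C.Mfin.toFinset.filter (fun z => z < a) := by
        simp only [Finset.mem_filter, Set.Finite.mem_toFinset]
        exact ⟨hz, hlt⟩
      have := Finset.card_pos.mpr ⟨z, hmem⟩
      omega
    have hstep : pT a = some u := (C.hon a hMa u).mpr (Or.inr ⟨rfl, hempty⟩)
    refine ⟨Relation.ReflTransGen.single hstep, ?_⟩
    intro b hMb hle
    rcases eq_or_lt_of_le hle with rfl | hlt
    · exact Relation.ReflTransGen.refl
    · exact absurd hlt (hempty b hMb)
  | succ n ih =>
    intro a hMa hcard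
    by_cases hex : ∃ z, onMergedPath p₁ v w u z ∧ z < a
    · obtain ⟨z₀, hz₀⟩ := hex
      have hne : (C.Mfin.toFinset.filter (fun z => z < a)).Nonempty := by
        refine ⟨z₀, ?_⟩
        simp only [Finset.mem_filter, Set.Finite.mem_toFinset]
        exact hz₀
      set c := (C.Mfin.toFinset.filter (fun z => z < a)).max' hne with hc
      have hcF : c ∈ C.Mfin.toFinset.filter (fun z => z < a) := Finset.max'_mem _ hne
      have hMc : onMergedPath p₁ v w u c ∧ c < a := by
        simpa only [Finset.mem_filter, Set.Finite.mem_toFinset, Set.mem_setOf_eq] using hcF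
      have hmax : ∀ z, onMergedPath p₁ v w u z → z < a → z ≤ c := by
        intro z hz hlt
        refine Finset.le_max' _ z ?_
        simp only [Finset.mem_filter, Set.Finite.mem_toFinset]
        exact ⟨hz, hlt⟩
      have hstep : pT a = some c := (C.hon a hMa c).mpr (Or.inl ⟨hMc.1, hMc.2, hmax⟩)
      have hcard' : (C.Mfin.toFinset.filter (fun z => z < c)).card ≤ n := by
        have hsub : C.Mfin.toFinset.filter (fun z => z < c) ⊆
            (C.Mfin.toFinset.filter (fun z => z < a)).erase c := by
          intro z hz
          simp only [Finset.mem_filter, Set.Finite.mem_toFinset] at hz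
          rw [Finset.mem_erase]
          constructor
          · omega
          · simp only [Finset.mem_filter, Set.Finite.mem_toFinset]
            exact ⟨hz.1, by omega⟩
        have h1 := Finset.card_le_card hsub
        rw [Finset.card_erase_of_mem hcF] at h1
        omega
      obtain ⟨hcu, hcb⟩ := ih c hMc.1 hcard'
      refine ⟨Relation.ReflTransGen.head hstep hcu, ?_⟩
      intro b hMb hle
      rcases eq_or_lt_of_le hle with rfl | hlt
      · exact Relation.ReflTransGen.refl
      · exact Relation.ReflTransGen.head hstep (hcb b hMb (hmax b hMb hlt))
    · have hempty : ∀ z, onMergedPath p₁ v w u z → ¬ z < a :=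
        fun z hz hlt => hex ⟨z, hz, hlt⟩
      have hstep : pT a = some u := (C.hon a hMa u).mpr (Or.inr ⟨rfl, hempty⟩)
      refine ⟨Relation.ReflTransGen.single hstep, ?_⟩
      intro b hMb hle
      rcases eq_or_lt_of_le hle with rfl | hlt
      · exact Relation.ReflTransGen.refl
      · exact absurd hlt (hempty b hMb)

lemma chainM {a : ℤ} (hMa : onMergedPath p₁ v w u a) :
    anc pT a u ∧ ∀ b, onMergedPath p₁ v w u b → b ≤ a → anc pT a b :=
  C.chainM_aux _ a hMa le_rfl

lemma deep_exists {x s₀ : ℤ} (hM : onMergedPath p₁ v w u s₀) (hxs : anc p₁ x s₀) :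
    ∃ t, Deep p₁ v w u x t := by
  have hAfin : Set.Finite {s : ℤ | onMergedPath p₁ v w u s ∧ anc p₁ x s} :=
    C.Mfin.subset (fun z hz => hz.1)
  have hne : hAfin.toFinset.Nonempty := by
    refine ⟨s₀, ?_⟩
    rw [Set.Finite.mem_toFinset]
    exact ⟨hM, hxs⟩
  set t := hAfin.toFinset.max' hne with ht
  have htA : onMergedPath p₁ v w u t ∧ anc p₁ x t := by
    have := hAfin.toFinset.max'_mem hne
    rwa [Set.Finite.mem_toFinset] at this
  refine ⟨t, htA.1, htA.2, ?_⟩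
  intro s hMs hxs'
  have hle : s ≤ t := by
    refine hAfin.toFinset.le_max' s ?_
    rw [Set.Finite.mem_toFinset]
    exact ⟨hMs, hxs'⟩
  rcases anc_comp htA.2 hxs' with h | h
  · exact h
  · have h2 : t ≤ s := anc_le C.hheap h
    have h3 : s = t := le_antisymm hle h2
    rw [h3]
    exact Relation.ReflTransGen.refl

lemma segPT {t t₀ : ℤ} : ∀ {x : ℤ}, anc p₁ x t → anc p₁ t t₀ →
    (∀ s, onMergedPath p₁ v w u s → anc p₁ x s → anc p₁ t₀ s) → anc pT x t := by
  intro x hxt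
  induction hxt using Relation.ReflTransGen.head_induction_on with
  | refl => intro _ _; exact Relation.ReflTransGen.refl
  | @head a c step rest ih =>
    intro htt₀ hdeep
    by_cases hat : a = t
    · exact hat ▸ Relation.ReflTransGen.refl
    · have hMa : ¬ onMergedPath p₁ v w u a := by
        intro hMa
        have h1 : anc p₁ t₀ a := hdeep a hMa Relation.ReflTransGen.refl
        have h2 : anc p₁ a t₀ :=
          anc_trans (Relation.ReflTransGen.head step rest) htt₀
        have h3 : a = t₀ := anc_antisymm C.hheap h2 h1
        subst h3
        exact hat (anc_antisymm C.hheap (Relation.ReflTransGen.head step rest) htt₀)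
      have stepT : prel pT a c := by
        show pT a = some c
        rw [C.hoff a hMa]
        exact step
      refine Relation.ReflTransGen.head stepT (ih htt₀ ?_)
      intro s hMs hcs
      exact hdeep s hMs (Relation.ReflTransGen.head step hcs)

lemma charB {x t₀ t : ℤ} (hd : Deep p₁ v w u x t₀)
    (h : (anc p₁ x t ∧ anc p₁ t t₀) ∨ (onMergedPath p₁ v w u t ∧ t ≤ t₀) ∨ anc p₁ u t) :
    anc pT x t := by
  obtain ⟨hMt₀, hxt₀, hdeep⟩ := hd
  have hbase : anc pT x t₀ := C.segPT hxt₀ Relation.ReflTransGen.refl hdeep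
  rcases h with ⟨hxt, htt₀⟩ | ⟨hMt, hle⟩ | hut
  · exact C.segPT hxt htt₀ hdeep
  · exact anc_trans hbase ((C.chainM hMt₀).2 t hMt hle)
  · exact anc_trans hbase (anc_trans (C.chainM hMt₀).1
      (C.anc_pT_of_offpath hut (fun s hs => C.notM_of_anc_u hs)))

lemma reachM {t : ℤ} : ∀ {a : ℤ}, anc pT a t → onMergedPath p₁ v w u a →
    (onMergedPath p₁ v w u t ∧ t ≤ a) ∨ anc p₁ u t := by
  intro a h
  induction h using Relation.ReflTransGen.head_induction_on with
  | refl => exact fun hMt => Or.inl ⟨hMt, le_rfl⟩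
  | @head a c step rest ih =>
    intro hMa
    rcases (C.hon a hMa c).mp step with ⟨hMc, hlt, _⟩ | ⟨rfl, _⟩
    · rcases ih hMc with ⟨hMt, hle⟩ | hut
      · exact Or.inl ⟨hMt, le_trans hle (le_of_lt hlt)⟩
      · exact Or.inr hut
    · exact Or.inr (C.anc_p1_of_offpath rest (fun s hs => C.notM_of_anc_u hs))

lemma charF {x t₀ t : ℤ} (hd : Deep p₁ v w u x t₀) (h : anc pT x t) :
    (anc p₁ x t ∧ anc p₁ t t₀) ∨ (onMergedPath p₁ v w u t ∧ t ≤ t₀) ∨ anc p₁ u t := by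
  obtain ⟨hMt₀, hxt₀, hdeep⟩ := hd
  suffices H : ∀ {c : ℤ}, anc pT c t → anc p₁ x c → anc p₁ c t₀ →
      (anc p₁ x t ∧ anc p₁ t t₀) ∨ (onMergedPath p₁ v w u t ∧ t ≤ t₀) ∨ anc p₁ u t by
    exact H h Relation.ReflTransGen.refl hxt₀
  intro c hct
  induction hct using Relation.ReflTransGen.head_induction_on with
  | refl => exact fun hxc hct₀ => Or.inl ⟨hxc, hct₀⟩
  | @head a d step rest ih =>
    intro hxa hat₀
    by_cases hMa : onMergedPath p₁ v w u a
    · have h3 : a = t₀ := anc_antisymm C.hheap hat₀ (hdeep a hMa hxa)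
      rcases C.reachM (Relation.ReflTransGen.head step rest) hMa with ⟨hMt, hle⟩ | hut
      · exact Or.inr (Or.inl ⟨hMt, h3 ▸ hle⟩)
      · exact Or.inr (Or.inr hut)
    · have stepP : prel p₁ a d := by
        show p₁ a = some d
        rw [← C.hoff a hMa]
        exact step
      refine ih (Relation.ReflTransGen.tail hxa stepP) ?_
      rcases Relation.ReflTransGen.cases_head hat₀ with rfl | ⟨d', step', rest'⟩
      · exact absurd hMt₀ hMa
      · have hdd : d = d' := prel_func stepP step'
        rw [hdd]
        exact rest'

lemma anc_mono {x t : ℤ} (h : anc p₁ x t) : anc pT x t := by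
  by_cases hH : ∃ s, onMergedPath p₁ v w u s ∧ anc p₁ x s
  · obtain ⟨s₀, hMs₀, hxs₀⟩ := hH
    obtain ⟨t₀, hd⟩ := C.deep_exists hMs₀ hxs₀
    refine C.charB hd ?_
    rcases anc_comp h hd.2.1 with h1 | h1
    · exact Or.inl ⟨h, h1⟩
    · rcases anc_comp h1 (C.M_anc_u hd.1) with h2 | h2
      · by_cases htu : t = u
        · exact Or.inr (Or.inr (by rw [htu]; exact Relation.ReflTransGen.refl))
        · have hMt : onMergedPath p₁ v w u t := by
            rcases hd.1 with ⟨hv', _, _⟩ | ⟨hw', _, _⟩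
            · exact Or.inl ⟨anc_trans hv' h1, h2, htu⟩
            · exact Or.inr ⟨anc_trans hw' h1, h2, htu⟩
          exact Or.inr (Or.inl ⟨hMt, anc_le C.hheap h1⟩)
      · exact Or.inr (Or.inr h2)
  · push_neg at hH
    exact C.anc_pT_of_offpath h (fun s hs hMs => hH s hMs hs)


lemma not_anc_w_qc : ¬ anc p₁ w qc := by
  intro h
  have h0 : anc p₁ u qc := C.hnca.2.2 qc C.hqcv h
  have h1 : qc ≤ u := anc_le C.hheap h0
  have h2 : u < qc := C.hheap qc u C.hqc
  omega

lemma M_qc : onMergedPath p₁ v w u qc := by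
  refine Or.inl ⟨C.hqcv, Relation.ReflTransGen.single C.hqc, ?_⟩
  intro h
  have h2 : u < qc := C.hheap qc u C.hqc
  omega

lemma v_side_below_qc {s : ℤ} (hv' : anc p₁ v s) (hsu : anc p₁ s u) (hsne : s ≠ u) :
    anc p₁ s qc := by
  rcases anc_comp hv' C.hqcv with h | h
  · exact h
  · rcases Relation.ReflTransGen.cases_head h with rfl | ⟨d, step, rest⟩
    · exact Relation.ReflTransGen.refl
    · have hd : d = u := prel_func step C.hqc
      rw [hd] at rest
      have h1 : s ≤ u := anc_le C.hheap rest
      have h2 : u < s := anc_lt C.hheap hsu (Ne.symm hsne)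
      omega

lemma side_in {x s : ℤ} (hxq : anc p₁ x qc) (hMs : onMergedPath p₁ v w u s)
    (hxs : anc p₁ x s) : anc p₁ v s := by
  rcases hMs with ⟨hv', _, _⟩ | ⟨hw', hsu, hsne⟩
  · exact hv'
  · exfalso
    rcases anc_comp hxs hxq with h | h
    · exact C.not_anc_w_qc (anc_trans hw' h)
    · rcases Relation.ReflTransGen.cases_head h with rfl | ⟨d, step, rest⟩
      · exact C.not_anc_w_qc hw'
      · have hd : d = u := prel_func step C.hqc
        rw [hd] at rest
        have h1 : s ≤ u := anc_le C.hheap rest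
        have h2 : u < s := anc_lt C.hheap hsu (Ne.symm hsne)
        omega

lemma side_out {x s : ℤ} (hxq : ¬ anc p₁ x qc) (hMs : onMergedPath p₁ v w u s)
    (hxs : anc p₁ x s) : anc p₁ w s := by
  rcases hMs with ⟨hv', hsu, hsne⟩ | ⟨hw', _, _⟩
  · exact absurd (anc_trans hxs (C.v_side_below_qc hv' hsu hsne)) hxq
  · exact hw'

lemma sides_disj {s : ℤ} (hv' : anc p₁ v s) (hw' : anc p₁ w s)
    (hsu : anc p₁ s u) (hsne : s ≠ u) : False := by
  have h0 : anc p₁ u s := C.hnca.2.2 s hv' hw'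
  have h1 : s ≤ u := anc_le C.hheap h0
  have h2 : u < s := anc_lt C.hheap hsu (Ne.symm hsne)
  omega

lemma nca_nn {x y z : ℤ} (hx : ∀ s, anc p₁ x s → ¬ onMergedPath p₁ v w u s)
    (hy : ∀ s, anc p₁ y s → ¬ onMergedPath p₁ v w u s)
    (hz : IsNca p₁ x y z) : IsNca pT x y z := by
  refine ⟨C.anc_pT_of_offpath hz.1 hx, C.anc_pT_of_offpath hz.2.1 hy, ?_⟩
  intro s h1 h2
  have h1' := C.anc_p1_of_offpath h1 hx
  have h2' := C.anc_p1_of_offpath h2 hy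
  exact C.anc_pT_of_offpath (hz.2.2 s h1' h2') (fun s' hs' => hx s' (anc_trans hz.1 hs'))

lemma nca_Mn {x y z tx : ℤ} (hdx : Deep p₁ v w u x tx)
    (hy : ∀ s, anc p₁ y s → ¬ onMergedPath p₁ v w u s)
    (hz : IsNca p₁ x y z) : IsNca pT x y z := by
  have hzoff : ∀ s, anc p₁ z s → ¬ onMergedPath p₁ v w u s :=
    fun s hs => hy s (anc_trans hz.2.1 hs)
  refine ⟨C.anc_mono hz.1, C.anc_pT_of_offpath hz.2.1 hy, ?_⟩
  intro s h1 h2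
  have h2' := C.anc_p1_of_offpath h2 hy
  rcases C.charF hdx h1 with ⟨h1', _⟩ | ⟨hMs, _⟩ | hus
  · exact C.anc_pT_of_offpath (hz.2.2 s h1' h2') hzoff
  · exact absurd hMs (hy s h2')
  · have hxs : anc p₁ x s := anc_trans hdx.2.1 (anc_trans (C.M_anc_u hdx.1) hus)
    exact C.anc_pT_of_offpath (hz.2.2 s hxs h2') hzoff

lemma nca_MM {x y z tx ty : ℤ} (hdx : Deep p₁ v w u x tx) (hdy : Deep p₁ v w u y ty)
    (hcomp : anc p₁ tx ty) (hz : IsNca p₁ x y z) : IsNca pT x y z := by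
  have hxty : anc p₁ x ty := anc_trans hdx.2.1 hcomp
  have hzty : anc p₁ z ty := hz.2.2 ty hxty hdy.2.1
  have hdz : Deep p₁ v w u z ty :=
    ⟨hdy.1, hzty, fun s hMs hzs => hdy.2.2 s hMs (anc_trans hz.2.1 hzs)⟩
  refine ⟨C.anc_mono hz.1, C.anc_mono hz.2.1, ?_⟩
  intro s h1 h2
  rcases C.charF hdy h2 with ⟨h2', hsty⟩ | ⟨hMs, hle⟩ | hus
  · rcases C.charF hdx h1 with ⟨h1', _⟩ | ⟨hMs, _⟩ | hus
    · exact C.charB hdz (Or.inl ⟨hz.2.2 s h1' h2', hsty⟩)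
    · have h3 : anc p₁ ty s := hdy.2.2 s hMs h2'
      have h4 : s = ty := anc_antisymm C.hheap hsty h3
      exact C.charB hdz (Or.inr (Or.inl ⟨hMs, le_of_eq h4⟩))
    · exact C.charB hdz (Or.inr (Or.inr hus))
  · exact C.charB hdz (Or.inr (Or.inl ⟨hMs, hle⟩))
  · exact C.charB hdz (Or.inr (Or.inr hus))

lemma nca2_MM {x y tx ty : ℤ} (hdx : Deep p₁ v w u x tx) (hdy : Deep p₁ v w u y ty)
    (hlt : tx < ty) (h1 : ¬ anc p₁ tx ty) (h2 : ¬ anc p₁ ty tx) :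
    IsNca pT x y tx := by
  refine ⟨C.anc_mono hdx.2.1, C.charB hdy (Or.inr (Or.inl ⟨hdx.1, le_of_lt hlt⟩)), ?_⟩
  intro s hs1 hs2
  rcases C.charF hdx hs1 with ⟨hs1', hstx⟩ | ⟨hMs, hle⟩ | hus
  · rcases C.charF hdy hs2 with ⟨hs2', hsty⟩ | ⟨hMs, hlety⟩ | hus
    · rcases anc_comp hstx hsty with h | h
      · exact absurd h h1
      · exact absurd h h2
    · have h3 : anc p₁ tx s := hdx.2.2 s hMs hs1'
      have h4 : s = tx := anc_antisymm C.hheap hstx h3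
      rw [← h4]
      exact Relation.ReflTransGen.refl
    · exact anc_trans (C.chainM hdx.1).1
        (C.anc_pT_of_offpath hus fun s' hs' => C.notM_of_anc_u hs')
  · exact (C.chainM hdx.1).2 s hMs hle
  · exact anc_trans (C.chainM hdx.1).1
      (C.anc_pT_of_offpath hus fun s' hs' => C.notM_of_anc_u hs')

lemma nca2_Mn {x y r tx : ℤ} (hdx : Deep p₁ v w u x tx)
    (hy : ∀ s, anc p₁ y s → ¬ onMergedPath p₁ v w u s)
    (hur : anc p₁ u r) (hyr : anc p₁ y r)
    (hmin : ∀ s, anc p₁ u s → anc p₁ y s → anc p₁ r s) :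
    IsNca pT x y r := by
  have hroff : ∀ s, anc p₁ r s → ¬ onMergedPath p₁ v w u s :=
    fun s hs => hy s (anc_trans hyr hs)
  refine ⟨C.charB hdx (Or.inr (Or.inr hur)), C.anc_pT_of_offpath hyr hy, ?_⟩
  intro s hs1 hs2
  have hs2' := C.anc_p1_of_offpath hs2 hy
  rcases C.charF hdx hs1 with ⟨hs1', hstx⟩ | ⟨hMs, _⟩ | hus
  · exact absurd hdx.1 (hy tx (anc_trans hs2' hstx))
  · exact absurd hMs (hy s hs2')
  · exact C.anc_pT_of_offpath (hmin s hus hs2') hroff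

end Ctx
end MergeAux

open MergeAux in
/-- Merging, inside a single heap-ordered tree `T₁`, the paths from `v` and `w` up
to (but excluding) `u = nca(v,w) ∉ {v,w}`, with `q` the child of `u` towards `v`
and `T₂` the subtree rooted at `q`: in the resulting tree `T`, if `x` and `y` are
both in `T₂` or both outside `T₂`, then `nca_T(x,y) = min T₁[x,y]`; if exactly one,
say `x`, is in `T₂`, then `nca_T(x,y) = min (T₂[x,v] ∪ T₁[w,y])`. -/
theorem merge_same_tree_nca (S : Set ℤ) (p₁ pT : ℤ → Option ℤ) (v w u qc : ℤ)
    (hdom : ∀ a b : ℤ, p₁ a = some b → a ∈ S ∧ b ∈ S)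
    (hheap : ∀ a b : ℤ, p₁ a = some b → b < a)
    (hv : v ∈ S) (hw : w ∈ S)
    (hnca : IsNca p₁ v w u) (huv : u ≠ v) (huw : u ≠ w)
    (hqc : p₁ qc = some u) (hqcv : anc p₁ v qc)
    -- `pT` agrees with `p₁` off the merged path:
    (hoff : ∀ x : ℤ, ¬ onMergedPath p₁ v w u x → pT x = p₁ x)
    -- on the merged path, `pT` links each node to the greatest smaller node of the
    -- merged path, and the minimum node of the merged path to `u`:
    (hon : ∀ x : ℤ, onMergedPath p₁ v w u x → ∀ b : ℤ,
      pT x = some b ↔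
        ((onMergedPath p₁ v w u b ∧ b < x ∧
            ∀ z : ℤ, onMergedPath p₁ v w u z → z < x → z ≤ b) ∨
         (b = u ∧ ∀ z : ℤ, onMergedPath p₁ v w u z → ¬ z < x))) :
    (∀ x ∈ S, ∀ y ∈ S,
        ((anc p₁ x qc ∧ anc p₁ y qc) ∨ (¬ anc p₁ x qc ∧ ¬ anc p₁ y qc)) →
        ∀ z m : ℤ, IsNca p₁ x y z → IsNca pT x y m →
          IsLeast (pathSet p₁ x y z) m) ∧
    (∀ x ∈ S, ∀ y ∈ S, anc p₁ x qc → ¬ anc p₁ y qc →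
        ∀ u₁ u₂ m : ℤ, IsNca p₁ x v u₁ → IsNca p₁ w y u₂ → IsNca pT x y m →
          IsLeast (pathSet p₁ x v u₁ ∪ pathSet p₁ w y u₂) m) := by
  have C : Ctx p₁ pT v w u qc := ⟨hheap, hnca, huv, huw, hqc, hqcv, hoff, hon⟩
  constructor
  · -- Part 1
    intro x _ y _ hside z m hz hm
    have hzT : IsNca pT x y z := by
      by_cases hHx : ∃ s, onMergedPath p₁ v w u s ∧ anc p₁ x s
      · by_cases hHy : ∃ s, onMergedPath p₁ v w u s ∧ anc p₁ y s
        · obtain ⟨sx, hMsx, hxsx⟩ := hHx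
          obtain ⟨sy, hMsy, hysy⟩ := hHy
          obtain ⟨tx, hdx⟩ := C.deep_exists hMsx hxsx
          obtain ⟨ty, hdy⟩ := C.deep_exists hMsy hysy
          have hcomp : anc p₁ tx ty ∨ anc p₁ ty tx := by
            rcases hside with ⟨hxq, hyq⟩ | ⟨hxq, hyq⟩
            · exact anc_comp (C.side_in hxq hdx.1 hdx.2.1) (C.side_in hyq hdy.1 hdy.2.1)
            · exact anc_comp (C.side_out hxq hdx.1 hdx.2.1) (C.side_out hyq hdy.1 hdy.2.1)
          rcases hcomp with h | h
          · exact C.nca_MM hdx hdy h hz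
          · exact isNca_swap (C.nca_MM hdy hdx h (isNca_swap hz))
        · have hy' : ∀ s, anc p₁ y s → ¬ onMergedPath p₁ v w u s :=
            fun s hs hMs => hHy ⟨s, hMs, hs⟩
          obtain ⟨sx, hMsx, hxsx⟩ := hHx
          obtain ⟨tx, hdx⟩ := C.deep_exists hMsx hxsx
          exact C.nca_Mn hdx hy' hz
      · have hx' : ∀ s, anc p₁ x s → ¬ onMergedPath p₁ v w u s :=
          fun s hs hMs => hHx ⟨s, hMs, hs⟩
        by_cases hHy : ∃ s, onMergedPath p₁ v w u s ∧ anc p₁ y s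
        · obtain ⟨sy, hMsy, hysy⟩ := hHy
          obtain ⟨ty, hdy⟩ := C.deep_exists hMsy hysy
          exact isNca_swap (C.nca_Mn hdy hx' (isNca_swap hz))
        · have hy' : ∀ s, anc p₁ y s → ¬ onMergedPath p₁ v w u s :=
            fun s hs hMs => hHy ⟨s, hMs, hs⟩
          exact C.nca_nn hx' hy' hz
    have hmz : m = z := nca_unique C.pT_heap hm hzT
    rw [hmz]
    constructor
    · exact Or.inl ⟨hz.1, Relation.ReflTransGen.refl⟩
    · rintro t (⟨_, h⟩ | ⟨_, h⟩) <;> exact anc_le hheap h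
  · -- Part 2
    intro x _ y _ hxq hyq u₁ u₂ m h1 h2 hm
    obtain ⟨tx, hdx⟩ := C.deep_exists C.M_qc hxq
    have hvtx : anc p₁ v tx := C.side_in hxq hdx.1 hdx.2.1
    have hu₁tx : anc p₁ u₁ tx := h1.2.2 tx hdx.2.1 hvtx
    have htxle : tx ≤ u₁ := anc_le hheap hu₁tx
    have hutx : u < tx := C.u_lt_M hdx.1
    have hMu₁ : onMergedPath p₁ v w u u₁ := by
      refine Or.inl ⟨h1.2.1, anc_trans hu₁tx (C.M_anc_u hdx.1), ?_⟩
      intro heq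
      omega
    have he1 : u₁ = tx := anc_antisymm hheap hu₁tx (hdx.2.2 u₁ hMu₁ h1.1)
    by_cases hHy : ∃ s, onMergedPath p₁ v w u s ∧ anc p₁ y s
    · obtain ⟨sy, hMsy, hysy⟩ := hHy
      obtain ⟨ty, hdy⟩ := C.deep_exists hMsy hysy
      have hwty : anc p₁ w ty := C.side_out hyq hdy.1 hdy.2.1
      have hu₂ty : anc p₁ u₂ ty := h2.2.2 ty hwty hdy.2.1
      have htyle : ty ≤ u₂ := anc_le hheap hu₂ty
      have huty : u < ty := C.u_lt_M hdy.1
      have hMu₂ : onMergedPath p₁ v w u u₂ := by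
        refine Or.inr ⟨h2.1, anc_trans hu₂ty (C.M_anc_u hdy.1), ?_⟩
        intro heq
        omega
      have he2 : u₂ = ty := anc_antisymm hheap hu₂ty (hdy.2.2 u₂ hMu₂ h2.2.1)
      have hninc1 : ¬ anc p₁ tx ty := fun h =>
        C.sides_disj (anc_trans hvtx h) hwty (C.M_anc_u hdy.1) (C.M_ne_u hdy.1)
      have hninc2 : ¬ anc p₁ ty tx := fun h =>
        C.sides_disj hvtx (anc_trans hwty h) (C.M_anc_u hdx.1) (C.M_ne_u hdx.1)
      have htxty : tx ≠ ty := fun heq => hninc1 (heq ▸ Relation.ReflTransGen.refl)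
      rcases lt_or_gt_of_ne htxty with hlt | hlt
      · have hm0 : IsNca pT x y tx := C.nca2_MM hdx hdy hlt hninc1 hninc2
        have hmeq : m = tx := nca_unique C.pT_heap hm hm0
        constructor
        · rw [hmeq, ← he1]
          exact Or.inl (Or.inl ⟨h1.1, Relation.ReflTransGen.refl⟩)
        · rintro t ((⟨_, h⟩ | ⟨_, h⟩) | (⟨_, h⟩ | ⟨_, h⟩)) <;>
            · have := anc_le hheap h
              omega
      · have hm0 : IsNca pT x y ty :=
          isNca_swap (C.nca2_MM hdy hdx hlt hninc2 hninc1)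
        have hmeq : m = ty := nca_unique C.pT_heap hm hm0
        constructor
        · rw [hmeq, ← he2]
          exact Or.inr (Or.inl ⟨h2.1, Relation.ReflTransGen.refl⟩)
        · rintro t ((⟨_, h⟩ | ⟨_, h⟩) | (⟨_, h⟩ | ⟨_, h⟩)) <;>
            · have := anc_le hheap h
              omega
    · have hy' : ∀ s, anc p₁ y s → ¬ onMergedPath p₁ v w u s :=
        fun s hs hMs => hHy ⟨s, hMs, hs⟩
      have hu₂nM : ¬ onMergedPath p₁ v w u u₂ := hy' u₂ h2.2.1
      have huu₂ : anc p₁ u u₂ := by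
        rcases anc_comp C.hnca.2.1 h2.1 with h | h
        · exact h
        · by_cases hne : u₂ = u
          · rw [hne]
            exact Relation.ReflTransGen.refl
          · exact absurd (Or.inr ⟨h2.1, h, hne⟩) hu₂nM
      have hmin : ∀ s, anc p₁ u s → anc p₁ y s → anc p₁ u₂ s :=
        fun s hus hys => h2.2.2 s (anc_trans C.hnca.2.1 hus) hys
      have hm0 : IsNca pT x y u₂ := C.nca2_Mn hdx hy' huu₂ h2.2.1 hmin
      have hmeq : m = u₂ := nca_unique C.pT_heap hm hm0
      have hu₂u : u₂ ≤ u := anc_le hheap huu₂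
      constructor
      · rw [hmeq]
        exact Or.inr (Or.inl ⟨h2.1, Relation.ReflTransGen.refl⟩)
      · rintro t ((⟨_, h⟩ | ⟨_, h⟩) | (⟨_, h⟩ | ⟨_, h⟩)) <;>
          · have := anc_le hheap h
            omega
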